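/- For the inverse Gaussian negative log-likelihood F(θ) = −(θy + (−2θ)^{1/2}) − 1/(2y) − (1/2)ln(2πy³) on θ < 0, with fixed y > 0, one has F'(θ) = −(y − (−2θ)^{−1/2}) and F''(θ) = (−2θ)^{−3/2}, and the ratio |F''(θ)|/(F'(θ))² tends to +∞ as θ → 0⁻, while |F'(θ)| and |F''(θ)| also tend to +∞ as θ → 0⁻. -/

import Mathlib

open Real Filter Set

lemma ratio_aux (y : ℝ) (hy : 0 < y) :
    Tendsto (fun t : ℝ => t ^ 3 / (t - y) ^ 2) atTop atTop := by
  apply tendsto_atTop_mono' atTop _ tendsto_id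
  filter_upwards [eventually_ge_atTop (y + 1)] with t ht
  have hty : (1 : ℝ) ≤ t - y := by linarith
  have ht0 : (0 : ℝ) < t := by linarith
  have h1 : (t - y) ^ 2 ≤ t ^ 2 := by nlinarith
  have h2 : (0 : ℝ) < (t - y) ^ 2 := by positivity
  calc (t : ℝ) = t ^ 3 / t ^ 2 := by field_simp
    _ ≤ t ^ 3 / (t - y) ^ 2 := by
        apply div_le_div_of_nonneg_left (by positivity) h2 h1

lemma base_tendsto : Tendsto (fun θ : ℝ => ((-2 * θ)⁻¹ : ℝ))
    (nhdsWithin 0 (Set.Iio 0)) atTop := by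
  apply tendsto_inv_nhdsGT_zero.comp
  apply tendsto_nhdsWithin_of_tendsto_nhds_of_eventually_within _
  · have h0 : Tendsto (fun θ : ℝ => -2 * θ) (nhds 0) (nhds (-2 * 0)) :=
      (continuous_const.mul continuous_id).tendsto 0
    rw [show (-2 * 0 : ℝ) = 0 by ring] at h0
    exact h0.mono_left nhdsWithin_le_nhds
  · filter_upwards [self_mem_nhdsWithin] with θ (hθ : θ < 0)
    show (0 : ℝ) < -2 * θ
    linarith

/-- For the inverse Gaussian negative log-likelihood
`F(θ) = −(θy + (−2θ)^{1/2}) − 1/(2y) − (1/2)ln(2πy³)` on `θ < 0`, with `y > 0`: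
`F'(θ) = −(y − (−2θ)^{−1/2})`, `F''(θ) = (−2θ)^{−3/2}`, and as `θ → 0⁻` the ratio
`|F''|/F'²`, `|F'|` and `|F''|` all tend to `+∞`. -/
theorem inverse_gaussian_superquadratic (y : ℝ) (hy : 0 < y) :
    (∀ θ : ℝ, θ < 0 →
      HasDerivAt (fun θ : ℝ =>
          -(θ * y + (-2 * θ) ^ ((1:ℝ)/2)) - 1/(2*y) - (1/2) * Real.log (2 * Real.pi * y^3))
        (-(y - (-2 * θ) ^ (-(1:ℝ)/2))) θ ∧
      HasDerivAt (fun θ : ℝ => -(y - (-2 * θ) ^ (-(1:ℝ)/2)))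
        ((-2 * θ) ^ (-(3:ℝ)/2)) θ) ∧
    Tendsto (fun θ : ℝ => |(-2 * θ) ^ (-(3:ℝ)/2)| / (-(y - (-2 * θ) ^ (-(1:ℝ)/2)))^2)
      (nhdsWithin 0 (Set.Iio 0)) atTop ∧
    Tendsto (fun θ : ℝ => |(-(y - (-2 * θ) ^ (-(1:ℝ)/2)))|)
      (nhdsWithin 0 (Set.Iio 0)) atTop ∧
    Tendsto (fun θ : ℝ => |(-2 * θ) ^ (-(3:ℝ)/2)|)
      (nhdsWithin 0 (Set.Iio 0)) atTop := by
  -- the key auxiliary limit: t(θ) := (-2θ)^(-1/2) → ∞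
  have hT : Tendsto (fun θ : ℝ => (-2 * θ) ^ (-(1:ℝ)/2))
      (nhdsWithin 0 (Set.Iio 0)) atTop := by
    have h := (tendsto_rpow_atTop (by norm_num : (0:ℝ) < 1/2)).comp base_tendsto
    refine h.congr' ?_
    filter_upwards [self_mem_nhdsWithin] with θ (hθ : θ < 0)
    have hpos : (0:ℝ) < -2 * θ := by linarith
    show ((-2 * θ)⁻¹) ^ ((1:ℝ)/2) = (-2 * θ) ^ (-(1:ℝ)/2)
    rw [Real.inv_rpow hpos.le, ← Real.rpow_neg hpos.le]
    norm_num
  have hevpos : ∀ᶠ θ : ℝ in nhdsWithin 0 (Set.Iio 0), (0:ℝ) < -2 * θ := by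
    filter_upwards [self_mem_nhdsWithin] with θ (hθ : θ < 0); linarith
  have habs : ∀ᶠ θ : ℝ in nhdsWithin 0 (Set.Iio 0),
      |(-2 * θ) ^ (-(3:ℝ)/2)| = ((-2 * θ) ^ (-(1:ℝ)/2)) ^ 3 := by
    filter_upwards [hevpos] with θ hpos
    rw [abs_of_nonneg (Real.rpow_nonneg hpos.le _),
      ← Real.rpow_natCast ((-2*θ) ^ (-(1:ℝ)/2)) 3, ← Real.rpow_mul hpos.le]
    norm_num
  refine ⟨?_, ?_, ?_, ?_⟩
  · intro θ hθ
    have hpos : (0:ℝ) < -2 * θ := by linarith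
    have hinner : HasDerivAt (fun θ : ℝ => -2 * θ) (-2) θ := by
      simpa using (hasDerivAt_id θ).const_mul (-2 : ℝ)
    have hsqrt : HasDerivAt (fun θ : ℝ => (-2 * θ) ^ ((1:ℝ)/2))
        (-(-2 * θ) ^ (-(1:ℝ)/2)) θ := by
      have h := (Real.hasDerivAt_rpow_const (p := (1:ℝ)/2)
        (Or.inl hpos.ne')).comp θ hinner
      refine h.congr_deriv ?_
      rw [show (1:ℝ)/2 - 1 = -(1:ℝ)/2 by norm_num]
      ring
    have hinv : HasDerivAt (fun θ : ℝ => (-2 * θ) ^ (-(1:ℝ)/2))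
        ((-2 * θ) ^ (-(3:ℝ)/2)) θ := by
      have h := (Real.hasDerivAt_rpow_const (p := -(1:ℝ)/2)
        (Or.inl hpos.ne')).comp θ hinner
      refine h.congr_deriv ?_
      rw [show -(1:ℝ)/2 - 1 = -(3:ℝ)/2 by norm_num]
      ring
    constructor
    · have h := ((((hasDerivAt_id θ).mul_const y).add hsqrt).neg.sub_const
        (1/(2*y))).sub_const ((1/2) * Real.log (2 * Real.pi * y^3))
      refine h.congr_deriv ?_
      ring
    · have h := ((hasDerivAt_const θ y).sub hinv).neg
      refine h.congr_deriv ?_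
      ring
  · have h := (ratio_aux y hy).comp hT
    refine h.congr' ?_
    filter_upwards [habs] with θ habsθ
    simp only [Function.comp]
    rw [habsθ]
    ring_nf
  · refine tendsto_atTop_mono ?_ (tendsto_atTop_add_const_right _ (-y) hT)
    intro θ
    have : (-(y - (-2 * θ) ^ (-(1:ℝ)/2))) = (-2 * θ) ^ (-(1:ℝ)/2) + -y := by ring
    rw [this]
    exact le_abs_self _
  · refine Tendsto.congr' ?_ ((tendsto_pow_atTop (by norm_num : 3 ≠ 0)).comp hT)
    filter_upwards [habs] with θ habsθ
    simp only [Function.comp]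
    rw [habsθ]
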